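/- With the notation of the context: if λ₁·λ₂ ≤ 2, then Φ(1) ∈ (0, π]; and if λ₁·λ₂ > 2, then Φ(1) ∈ (π, 2π). (This is Lemma 2.11: for lifts A, B of the parabolic elements π_∞(λ₁) and π_α(λ₂) to the m-fold covering group of PSL(2,ℝ), lev_m(A·B) − lev_m(A) − lev_m(B) equals 0 if λ₁λ₂ ≤ 2 and equals 1 otherwise.) -/

import Mathlib

/-- The parabolic element `π_∞(t·λ₁)` of `SL(2,ℝ)` as a matrix. -/
noncomputable def matA (l1 t : ℝ) : Matrix (Fin 2) (Fin 2) ℝ :=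
  !![1, t * l1; 0, 1]

/-- The parabolic element `π_α(t·λ₂)` of `SL(2,ℝ)` with fixed point `α`. -/
noncomputable def matB (l2 α t : ℝ) : Matrix (Fin 2) (Fin 2) ℝ :=
  !![1 - t * l2 * α, t * l2 * α ^ 2; -(t * l2), 1 + t * l2 * α]

/-- The product path `M(t) = A(t)·B(t)`. -/
noncomputable def matM (l1 l2 α t : ℝ) : Matrix (Fin 2) (Fin 2) ℝ :=
  matA l1 t * matB l2 α t

/-- `w(t) = (a(t)+d(t)) + i(b(t)−c(t))`. -/
noncomputable def wfun (l1 l2 α t : ℝ) : ℂ :=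
  ((matM l1 l2 α t 0 0 + matM l1 l2 α t 1 1 : ℝ) : ℂ) +
    Complex.I * ((matM l1 l2 α t 0 1 - matM l1 l2 α t 1 0 : ℝ) : ℂ)

lemma w_re (l1 l2 α t : ℝ) : (wfun l1 l2 α t).re = 2 - l1 * l2 * t ^ 2 := by
  simp [wfun, matM, matA, matB, Matrix.mul_apply, Fin.sum_univ_two, ← Complex.ofReal_pow]
  ring

lemma w_im (l1 l2 α t : ℝ) :
    (wfun l1 l2 α t).im = t * (l1 + l2 + l2 * α ^ 2) + l1 * l2 * α * t ^ 2 := by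
  simp [wfun, matM, matA, matB, Matrix.mul_apply, Fin.sum_univ_two, ← Complex.ofReal_pow]
  ring

lemma w_cont (l1 l2 α : ℝ) : Continuous (fun t => wfun l1 l2 α t) := by
  have : (fun t => wfun l1 l2 α t)
      = fun t => ((2 - l1 * l2 * t ^ 2 : ℝ) : ℂ)
        + ((t * (l1 + l2 + l2 * α ^ 2) + l1 * l2 * α * t ^ 2 : ℝ) : ℂ) * Complex.I := by
    funext t
    apply Complex.ext <;> simp [w_re, w_im, ← Complex.ofReal_pow]
  rw [this]
  fun_prop


/-- Lemma 2.11: for lifts of the parabolic elements `π_∞(λ₁)` and `π_α(λ₂)`,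
if `λ₁λ₂ ≤ 2` then `Φ(1) ∈ (0, π]`, and if `λ₁λ₂ > 2` then `Φ(1) ∈ (π, 2π)`. -/
theorem lemma211 (l1 l2 α : ℝ) (hl1 : 0 < l1) (hl2 : 0 < l2) (hα : 0 < α)
    (Φ : ℝ → ℝ) (hΦc : ContinuousOn Φ (Set.Icc 0 1)) (hΦ0 : Φ 0 = 0)
    (hΦ : ∀ t ∈ Set.Icc (0 : ℝ) 1,
      Complex.exp (Complex.I * (Φ t : ℂ))
        = (wfun l1 l2 α t / (‖wfun l1 l2 α t‖ : ℂ)) ^ 2) :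
    (l1 * l2 ≤ 2 → Φ 1 ∈ Set.Ioc 0 Real.pi) ∧
    (2 < l1 * l2 → Φ 1 ∈ Set.Ioo Real.pi (2 * Real.pi)) := by
  have hπ := Real.pi_pos
  set θ : ℝ → ℝ := fun t => (wfun l1 l2 α t).arg with hθdef
  have him : ∀ t : ℝ, 0 < t → 0 < (wfun l1 l2 α t).im := by
    intro t ht
    rw [w_im]
    have h1 : 0 < t * (l1 + l2 + l2 * α ^ 2) := by positivity
    have h2 : 0 ≤ l1 * l2 * α * t ^ 2 := by positivity
    linarith
  have hslit : ∀ t ∈ Set.Icc (0:ℝ) 1, wfun l1 l2 α t ∈ Complex.slitPlane := by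
    intro t ht
    rcases eq_or_lt_of_le ht.1 with h0 | h0
    · left
      rw [w_re, ← h0]
      norm_num
    · right
      exact (him t h0).ne'
  have hne : ∀ t ∈ Set.Icc (0:ℝ) 1, wfun l1 l2 α t ≠ 0 :=
    fun t ht => Complex.slitPlane_ne_zero (hslit t ht)
  have hθc : ContinuousOn θ (Set.Icc 0 1) := fun t ht =>
    ((Complex.continuousAt_arg (hslit t ht)).comp
      ((w_cont l1 l2 α).continuousAt)).continuousWithinAt
  have hexp : ∀ t ∈ Set.Icc (0:ℝ) 1,
      Complex.exp (Complex.I * (Φ t : ℂ)) = Complex.exp (Complex.I * ((2 * θ t : ℝ) : ℂ)) := by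
    intro t ht
    rw [hΦ t ht]
    have habs : ((‖wfun l1 l2 α t‖ : ℝ) : ℂ) ≠ 0 := by
      exact_mod_cast (norm_ne_zero_iff.mpr (hne t ht))
    have hdiv : wfun l1 l2 α t / (‖wfun l1 l2 α t‖ : ℂ) = Complex.exp ((θ t : ℂ) * Complex.I) := by
      rw [eq_comm, eq_div_iff habs, mul_comm]
      exact Complex.norm_mul_exp_arg_mul_I _
    rw [hdiv, ← Complex.exp_nat_mul]
    congr 1
    push_cast
    ring
  have hint : ∀ t ∈ Set.Icc (0:ℝ) 1, ∃ n : ℤ, Φ t - 2 * θ t = n * (2 * Real.pi) := by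
    intro t ht
    have h := hexp t ht
    rw [Complex.exp_eq_exp_iff_exists_int] at h
    obtain ⟨n, hn⟩ := h
    refine ⟨n, ?_⟩
    have hn' : Complex.I * (Φ t : ℂ)
        = Complex.I * (((2 * θ t : ℝ) : ℂ) + (n : ℂ) * (2 * Real.pi)) := by
      rw [hn]; ring
    have h2 := mul_left_cancel₀ Complex.I_ne_zero hn'
    have h3 : (Φ t : ℂ) = ((2 * θ t + n * (2 * Real.pi) : ℝ) : ℂ) := by
      rw [h2]; push_cast; ring
    have h4 : Φ t = 2 * θ t + n * (2 * Real.pi) := by exact_mod_cast h3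
    linarith
  have hθ0 : θ 0 = 0 := by
    apply Complex.arg_eq_zero_iff.mpr
    constructor
    · rw [w_re]; norm_num
    · rw [w_im]; ring
  -- the normalized difference is integer valued and continuous, so Φ 1 = 2 θ 1
  have key : Φ 1 = 2 * θ 1 := by
    set f : ℝ → ℝ := fun t => (Φ t - 2 * θ t) / (2 * Real.pi) with hfdef
    have hfc : ContinuousOn f (Set.Icc 0 1) :=
      (hΦc.sub (continuousOn_const.mul hθc)).div_const _
    have hfval : ∀ t ∈ Set.Icc (0:ℝ) 1, ∃ n : ℤ, f t = n := by
      intro t ht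
      obtain ⟨n, hn⟩ := hint t ht
      exact ⟨n, by rw [hfdef]; field_simp [hn]; linarith⟩
    have hf0 : f 0 = 0 := by
      rw [hfdef]
      simp [hΦ0, hθ0]
    have hnohalf : ∀ c : ℝ, c ∈ f '' Set.Icc (0:ℝ) 1 → c ≠ 1/2 ∧ c ≠ -(1/2) := by
      rintro c ⟨t, ht, rfl⟩
      obtain ⟨n, hn⟩ := hfval t ht
      constructor
      · rw [hn]; intro h
        have : (2 * n : ℝ) = 1 := by linarith
        have : (2 * n : ℤ) = 1 := by exact_mod_cast this
        omega
      · rw [hn]; intro h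
        have : (2 * n : ℝ) = -1 := by linarith
        have : (2 * n : ℤ) = -1 := by exact_mod_cast this
        omega
    have hf1 : f 1 = 0 := by
      obtain ⟨m, hm⟩ := hfval 1 (by norm_num)
      by_contra hne0
      have hmne : m ≠ 0 := by
        intro h; rw [h] at hm; simp at hm; exact hne0 hm
      rcases lt_or_gt_of_ne hmne with hmlt | hmgt
      · have hm1 : (m : ℝ) ≤ -1 := by exact_mod_cast (by omega : m ≤ -1)
        have hmem : -(1/2) ∈ Set.Icc (f 1) (f 0) := by
          rw [hf0, hm]; constructor <;> [linarith; norm_num]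
        have := intermediate_value_Icc' (by norm_num : (0:ℝ) ≤ 1) hfc hmem
        exact ((hnohalf _ this).2 rfl)
      · have hm1 : (1 : ℝ) ≤ m := by exact_mod_cast hmgt
        have hmem : (1/2 : ℝ) ∈ Set.Icc (f 0) (f 1) := by
          rw [hf0, hm]; constructor <;> [norm_num; linarith]
        have := intermediate_value_Icc (by norm_num : (0:ℝ) ≤ 1) hfc hmem
        exact ((hnohalf _ this).1 rfl)
    have : Φ 1 - 2 * θ 1 = 0 := by
      have := hf1
      rw [hfdef] at this
      field_simp at this
      linarith
    linarith
  have him1 : 0 < (wfun l1 l2 α 1).im := him 1 one_pos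
  have hθpos : 0 < θ 1 := by
    rcases lt_or_eq_of_le (Complex.arg_nonneg_iff.mpr him1.le) with h | h
    · exact h
    · exfalso
      have := Complex.arg_eq_zero_iff.mp h.symm
      exact him1.ne' this.2
  have hθltpi : θ 1 < Real.pi := by
    rcases lt_or_eq_of_le (Complex.arg_le_pi (wfun l1 l2 α 1)) with h | h
    · exact h
    · exfalso
      have := Complex.arg_eq_pi_iff.mp h
      exact him1.ne' this.2
  constructor
  · intro hL
    have hre : 0 ≤ (wfun l1 l2 α 1).re := by rw [w_re]; nlinarith
    have h2 : θ 1 ≤ Real.pi / 2 := Complex.arg_le_pi_div_two_iff.mpr (Or.inl hre)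
    exact ⟨by rw [key]; linarith, by rw [key]; linarith⟩
  · intro hL
    have hre : (wfun l1 l2 α 1).re < 0 := by rw [w_re]; nlinarith
    have h2 : Real.pi / 2 < θ 1 := by
      by_contra h
      push_neg at h
      rcases Complex.arg_le_pi_div_two_iff.mp h with h' | h'
      · exact absurd hre (not_lt.mpr h')
      · exact absurd him1 (not_lt.mpr h'.le)
    exact ⟨by rw [key]; linarith, by rw [key]; linarith⟩
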